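/- Let V be a finite type, D a directed graph on V (a relation giving the directed edges), and A, B distinct vertices of V such that there is no edge from A directly to B. For every natural number k, the following are equivalent: (a) A and B are not 2k-separable, i.e., there is no set W ⊆ V∖{A,B} with |W| ≤ 2k such that every directed path from A to B contains a vertex of W; (b) there exist 2k+1 directed paths from A to B that are pairwise internally vertex-disjoint (no two of them share a vertex other than A and B). -/

import Mathlib

set_option linter.unusedSectionVars false
set_option maxHeartbeats 1000000

namespace MengerAux

open List

variable {α : Type*}

lemma getLast?_append_right {l l' : List α} (h : l' ≠ []) :
    (l ++ l').getLast? = l'.getLast? := by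
  have h2 := List.dropLast_append_getLast h
  rw [← h2, ← List.append_assoc, List.getLast?_concat, List.getLast?_concat]

lemma head?_append_left {l l' : List α} (h : l ≠ []) :
    (l ++ l').head? = l.head? := by
  cases l with
  | nil => exact absurd rfl h
  | cons a t => rfl

lemma chain'_imp_strong {r s : α → α → Prop} :
    ∀ (l : List α), l.Chain' r →
      (∀ a b, a ∈ l.dropLast → b ∈ l.tail → r a b → s a b) → l.Chain' s
  | [], _, _ => List.isChain_nil
  | [a], _, _ => List.isChain_singleton a
  | a :: b :: t, h, him => by
      dsimp only [List.Chain'] at h ⊢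
      rw [List.isChain_cons_cons] at h ⊢
      refine ⟨him a b (by simp) (by simp) h.1, chain'_imp_strong (b :: t) h.2 ?_⟩
      intro a' b' ha hb hr
      refine him a' b' ?_ ?_ hr
      · simpa using Or.inr ha
      · simpa using Or.inr (by simpa using hb)

lemma exists_nodup_chain {r : α → α → Prop} :
    ∀ (n : ℕ) (l : List α), l.length ≤ n → l.Chain' r → l ≠ [] →
      ∃ m : List α, m.Chain' r ∧ m.Nodup ∧ m ≠ [] ∧ m.head? = l.head? ∧
        m.getLast? = l.getLast? ∧ ∀ v ∈ m, v ∈ l := by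
  intro n
  induction n with
  | zero => intro l hl _ hne; cases l with
      | nil => exact absurd rfl hne
      | cons a t => simp at hl
  | succ n ih =>
    intro l hl hc hne
    match l with
    | [] => exact absurd rfl hne
    | [a] => exact ⟨[a], List.isChain_singleton a, by simp, by simp, rfl, rfl, by simp⟩
    | a :: b :: t =>
      by_cases ha : a ∈ b :: t
      · obtain ⟨s, t', hst⟩ := List.append_of_mem ha
        have hsuf : (a :: t') <:+ (a :: b :: t) := by
          rw [hst]; exact (List.suffix_append s (a :: t')).trans (List.suffix_cons a _)
        have hlen : (a :: t').length ≤ n := by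
          have : (b :: t).length ≤ n := by simpa using hl
          rw [hst] at this; simp at this ⊢; omega
        obtain ⟨m, h1, h2, h3, h4, h5, h6⟩ :=
          ih (a :: t') hlen (hc.suffix hsuf) (by simp)
        refine ⟨m, h1, h2, h3, by rw [h4]; rfl, ?_, fun v hv => hsuf.sublist.mem (h6 v hv)⟩
        rw [h5]
        have e1 : (a :: b :: t).getLast? = (b :: t).getLast? := by
          simp [List.getLast?_cons_cons]
        rw [e1, hst, getLast?_append_right (l := s) (by simp)]
      · obtain ⟨m, h1, h2, h3, h4, h5, h6⟩ :=
          ih (b :: t) (by simpa using hl) (hc.suffix (List.suffix_cons a _)) (by simp)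
        refine ⟨a :: m, ?_, ?_, by simp, by simp, ?_, ?_⟩
        · dsimp only [List.Chain'] at ⊢
          rw [List.isChain_cons]
          refine ⟨fun h hh => ?_, h1⟩
          rw [h4] at hh
          have : h = b := by simpa using hh.symm
          subst this
          exact (List.isChain_cons_cons.mp hc).1
        · exact List.nodup_cons.mpr ⟨fun hm => ha (h6 a hm), h2⟩
        · rw [show a :: m = [a] ++ m from rfl, getLast?_append_right h3, h5]
          simp [List.getLast?_cons_cons]
        · intro v hv
          rcases List.mem_cons.mp hv with h | h
          · simp [h]
          · exact List.mem_cons_of_mem a (h6 v h)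

lemma first_hit {p : α → Prop} :
    ∀ (l : List α), (∃ v ∈ l, p v) →
      ∃ s v t, l = s ++ v :: t ∧ p v ∧ ∀ u ∈ s, ¬ p u := by
  intro l
  induction l with
  | nil => rintro ⟨v, hv, _⟩; simp at hv
  | cons a t ih =>
    intro h
    by_cases hpa : p a
    · exact ⟨[], a, t, rfl, hpa, by simp⟩
    · obtain ⟨v, hv, hpv⟩ := h
      have hvt : v ∈ t := by
        rcases List.mem_cons.mp hv with rfl | h; exact absurd hpv hpa; exact h
      obtain ⟨s, v', t', he, hp', hs⟩ := ih ⟨v, hvt, hpv⟩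
      refine ⟨a :: s, v', t', by rw [he]; rfl, hp', ?_⟩
      intro u hu
      rcases List.mem_cons.mp hu with rfl | h; exact hpa; exact hs u h

lemma last_hit {p : α → Prop} :
    ∀ (l : List α), (∃ v ∈ l, p v) →
      ∃ s v t, l = s ++ v :: t ∧ p v ∧ ∀ u ∈ t, ¬ p u := by
  intro l
  induction l with
  | nil => rintro ⟨v, hv, _⟩; simp at hv
  | cons a t ih =>
    intro h
    by_cases ht : ∃ v ∈ t, p v
    · obtain ⟨s, v', t', he, hp', hs⟩ := ih ht
      exact ⟨a :: s, v', t', by rw [he]; rfl, hp', hs⟩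
    · obtain ⟨v, hv, hpv⟩ := h
      have : v = a := by
        rcases List.mem_cons.mp hv with rfl | hvt; rfl
        exact absurd ⟨v, hvt, hpv⟩ ht
      subst this
      exact ⟨[], v, t, rfl, hpv, fun u hu hpu => ht ⟨u, hu, hpu⟩⟩

open List

section
variable {V : Type*} [DecidableEq V]

/-- `l` is a nonempty simple path in edge set `E` from a vertex of `S` to a vertex of `T`. -/
def Conn (E : Finset (V × V)) (S T : Finset V) (l : List V) : Prop :=
  l.Chain' (fun a b => (a, b) ∈ E) ∧ l.Nodup ∧ l ≠ [] ∧
    (∀ a, l.head? = some a → a ∈ S) ∧ (∀ b, l.getLast? = some b → b ∈ T)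

def Cut (E : Finset (V × V)) (S T R : Finset V) : Prop :=
  ∀ l, Conn E S T l → ∃ v ∈ R, v ∈ l

lemma conn_mono {E E' : Finset (V × V)} {S T : Finset V} {l : List V}
    (hE : E ⊆ E') (h : Conn E S T l) : Conn E' S T l :=
  ⟨h.1.imp (fun _ _ hab => hE hab), h.2.1, h.2.2.1, h.2.2.2.1, h.2.2.2.2⟩

lemma chain_erase_or_split (E : Finset (V × V)) (x y : V) :
    ∀ l : List V, l.Chain' (fun a b => (a, b) ∈ E) →
      l.Chain' (fun a b => (a, b) ∈ E.erase (x, y)) ∨ ∃ s t, l = s ++ x :: y :: t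
  | [] => fun _ => Or.inl List.isChain_nil
  | [a] => fun _ => Or.inl (List.isChain_singleton a)
  | a :: b :: t => fun h => by
      dsimp only [List.Chain'] at h
      rw [List.isChain_cons_cons] at h
      by_cases hab : (a, b) = (x, y)
      · obtain ⟨rfl, rfl⟩ := Prod.ext_iff.mp hab
        exact Or.inr ⟨[], t, rfl⟩
      · rcases chain_erase_or_split E x y (b :: t) h.2 with h' | ⟨s, t', h'⟩
        · exact Or.inl (List.isChain_cons_cons.mpr ⟨Finset.mem_erase.mpr ⟨hab, h.1⟩, h'⟩)
        · exact Or.inr ⟨a :: s, t', by rw [List.cons_append, ← h']⟩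

lemma cut_transfer_left {E : Finset (V × V)} {x y : V} {S T R₀ : Finset V}
    (hcut : Cut (E.erase (x, y)) S T R₀) (R : Finset V)
    (hR : Cut (E.erase (x, y)) S (insert x R₀) R) : Cut E S T R := by
  intro l hl
  obtain ⟨hch, hnd, hne, hhd, hlst⟩ := hl
  have key : ∃ s v t, l = s ++ v :: t ∧ v ∈ insert x R₀ ∧
      (s ++ [v]).Chain' (fun a b => (a, b) ∈ E.erase (x, y)) := by
    rcases chain_erase_or_split E x y l hch with hch' | ⟨s, t, rfl⟩
    · obtain ⟨v, hvR, hvl⟩ := hcut l ⟨hch', hnd, hne, hhd, hlst⟩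
      obtain ⟨s, t, rfl⟩ := List.append_of_mem hvl
      exact ⟨s, v, t, rfl, Finset.mem_insert_of_mem hvR,
        hch'.prefix ⟨t, by simp⟩⟩
    · refine ⟨s, x, y :: t, rfl, Finset.mem_insert_self _ _, ?_⟩
      have hx_s : x ∉ s := by
        intro hxs
        have := (List.nodup_append'.mp hnd).2.2
        exact this hxs (by simp)
      have hpre : (s ++ [x]).Chain' (fun a b => (a, b) ∈ E) :=
        hch.prefix ⟨y :: t, by simp⟩
      refine chain'_imp_strong _ hpre ?_
      intro a b ha _ hab
      rw [List.dropLast_concat] at ha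
      refine Finset.mem_erase.mpr ⟨?_, hab⟩
      intro hcontra
      rw [Prod.ext_iff] at hcontra
      simp only at hcontra
      exact hx_s (hcontra.1 ▸ ha)
  obtain ⟨s, v, t, heq, hvSx, hchain⟩ := key
  subst heq
  have hsub : (s ++ [v]) <+ (s ++ v :: t) :=
    List.Sublist.append_left ((List.singleton_sublist.mpr (by simp))) s
  have hconn : Conn (E.erase (x, y)) S (insert x R₀) (s ++ [v]) := by
    refine ⟨hchain, hnd.sublist hsub, by simp, ?_, ?_⟩
    · intro a ha
      apply hhd
      rw [List.head?_append] at ha ⊢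
      simpa using ha
    · intro b hb
      rw [List.getLast?_concat] at hb
      cases hb
      exact hvSx
  obtain ⟨u, huR, hum⟩ := hR _ hconn
  exact ⟨u, huR, hsub.mem hum⟩

lemma cut_transfer_right {E : Finset (V × V)} {x y : V} {S T R₀ : Finset V}
    (hcut : Cut (E.erase (x, y)) S T R₀) (R : Finset V)
    (hR : Cut (E.erase (x, y)) (insert y R₀) T R) : Cut E S T R := by
  intro l hl
  obtain ⟨hch, hnd, hne, hhd, hlst⟩ := hl
  have key : ∃ s v t, l = s ++ v :: t ∧ v ∈ insert y R₀ ∧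
      (v :: t).Chain' (fun a b => (a, b) ∈ E.erase (x, y)) := by
    rcases chain_erase_or_split E x y l hch with hch' | ⟨s, t, rfl⟩
    · obtain ⟨v, hvR, hvl⟩ := hcut l ⟨hch', hnd, hne, hhd, hlst⟩
      obtain ⟨s, t, rfl⟩ := List.append_of_mem hvl
      exact ⟨s, v, t, rfl, Finset.mem_insert_of_mem hvR, hch'.suffix ⟨s, rfl⟩⟩
    · refine ⟨s ++ [x], y, t, by simp, Finset.mem_insert_self _ _, ?_⟩
      have hy_t : y ∉ t := by
        have : (x :: y :: t).Nodup := (List.nodup_append'.mp hnd).2.1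
        simp at this
        exact this.2.1
      have hsuf : (y :: t).Chain' (fun a b => (a, b) ∈ E) :=
        hch.suffix ⟨s ++ [x], by simp⟩
      refine chain'_imp_strong _ hsuf ?_
      intro a b _ hb hab
      refine Finset.mem_erase.mpr ⟨?_, hab⟩
      intro hcontra
      rw [Prod.ext_iff] at hcontra
      simp only at hcontra
      have hb' : b ∈ t := by simpa using hb
      exact hy_t (hcontra.2 ▸ hb')
  obtain ⟨s, v, t, heq, hvSy, hchain⟩ := key
  subst heq
  have hsub : (v :: t) <+ (s ++ v :: t) := List.sublist_append_right s _
  have hconn : Conn (E.erase (x, y)) (insert y R₀) T (v :: t) := by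
    refine ⟨hchain, hnd.sublist hsub, by simp, ?_, ?_⟩
    · intro a ha
      cases ha
      exact hvSy
    · intro b hb
      apply hlst
      rwa [getLast?_append_right (by simp : (v :: t) ≠ [])]
  obtain ⟨u, huR, hum⟩ := hR _ hconn
  exact ⟨u, huR, hsub.mem hum⟩

lemma conn_truncate_first {E : Finset (V × V)} {S X : Finset V} {l : List V}
    (h : Conn E S X l) :
    ∃ m, Conn E S X m ∧ (∀ v ∈ m, v ∈ l) ∧
      ∀ v ∈ m, v ∈ X → m.getLast? = some v := by
  obtain ⟨hch, hnd, hne, hhd, hlst⟩ := h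
  have hex : ∃ v ∈ l, v ∈ X :=
    ⟨l.getLast hne, List.getLast_mem hne, hlst _ (List.getLast?_eq_getLast hne)⟩
  obtain ⟨s, v, t, heq, hvX, hs⟩ := first_hit l hex
  subst heq
  have hsub : (s ++ [v]) <+ (s ++ v :: t) :=
    List.Sublist.append_left ((List.singleton_sublist.mpr (by simp))) s
  refine ⟨s ++ [v], ⟨hch.prefix ⟨t, by simp⟩, hnd.sublist hsub, by simp, ?_, ?_⟩,
    fun u hu => hsub.mem hu, ?_⟩
  · intro a ha
    apply hhd
    rw [List.head?_append] at ha ⊢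
    simpa using ha
  · intro b hb
    rw [List.getLast?_concat] at hb
    cases hb
    exact hvX
  · intro u hu huX
    have : u = v := by
      rcases List.mem_append.mp hu with h' | h'
      · exact absurd huX (hs u h')
      · simpa using h'
    subst this
    exact List.getLast?_concat

lemma conn_truncate_last {E : Finset (V × V)} {Y T : Finset V} {l : List V}
    (h : Conn E Y T l) :
    ∃ m, Conn E Y T m ∧ (∀ v ∈ m, v ∈ l) ∧
      ∀ v ∈ m, v ∈ Y → m.head? = some v := by
  obtain ⟨hch, hnd, hne, hhd, hlst⟩ := h
  have hex : ∃ v ∈ l, v ∈ Y :=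
    ⟨l.head hne, List.head_mem hne, hhd _ (List.head?_eq_head hne)⟩
  obtain ⟨s, v, t, heq, hvY, hs⟩ := last_hit l hex
  subst heq
  have hsub : (v :: t) <+ (s ++ v :: t) := List.sublist_append_right s _
  refine ⟨v :: t, ⟨hch.suffix ⟨s, rfl⟩, hnd.sublist hsub, by simp, ?_, ?_⟩,
    fun u hu => hsub.mem hu, ?_⟩
  · intro a ha
    cases ha
    exact hvY
  · intro b hb
    apply hlst
    rwa [getLast?_append_right (by simp : (v :: t) ≠ [])]
  · intro u hu huY
    have : u = v := by
      rcases List.mem_cons.mp hu with h' | h'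
      · exact h'
      · exact absurd huY (hs u h')
    subst this
    rfl

lemma menger_empty [Fintype V] (n : ℕ) (S T : Finset V)
    (h : ∀ R : Finset V, Cut (∅ : Finset (V × V)) S T R → n ≤ R.card) :
    ∃ p : Fin n → List V, (∀ i, Conn (∅ : Finset (V × V)) S T (p i)) ∧
      ∀ i j, i ≠ j → ∀ v, v ∈ p i → v ∉ p j := by
  have hcut : Cut (∅ : Finset (V × V)) S T (S ∩ T) := by
    intro l hl
    obtain ⟨hch, hnd, hne, hhd, hlst⟩ := hl
    match l with
    | [] => exact absurd rfl hne
    | [a] => exact ⟨a, Finset.mem_inter.mpr ⟨hhd a rfl, hlst a rfl⟩, by simp⟩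
    | a :: b :: t => exact absurd (List.isChain_cons_cons.mp hch).1 (by simp)
  obtain ⟨U, hU, hUcard⟩ := Finset.exists_subset_card_eq (h _ hcut)
  let f := (Finset.equivFinOfCardEq hUcard).symm
  refine ⟨fun i => [(f i : V)], fun i => ?_, fun i j hij v hvi hvj => ?_⟩
  · have hmem := hU (f i).2
    exact ⟨List.isChain_singleton _, by simp, by simp,
      fun a ha => by cases ha; exact (Finset.mem_inter.mp hmem).1,
      fun b hb => by cases hb; exact (Finset.mem_inter.mp hmem).2⟩
  · simp only [List.mem_singleton] at hvi hvj
    subst hvj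
    exact hij (f.injective (Subtype.ext hvi)).symm

theorem setMenger [Fintype V] :
    ∀ (N : ℕ) (E : Finset (V × V)), E.card ≤ N → ∀ (n : ℕ) (S T : Finset V),
      (∀ R : Finset V, Cut E S T R → n ≤ R.card) →
      ∃ p : Fin n → List V, (∀ i, Conn E S T (p i)) ∧
        ∀ i j, i ≠ j → ∀ v, v ∈ p i → v ∉ p j := by
  intro N
  induction N with
  | zero =>
    intro E hE n S T h
    have hE0 : E = ∅ := Finset.card_eq_zero.mp (Nat.le_zero.mp hE)
    subst hE0
    exact menger_empty n S T h
  | succ N ih =>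
    intro E hE n S T h
    rcases eq_or_ne n 0 with rfl | hn0
    · exact ⟨fun i => i.elim0, fun i => i.elim0, fun i => i.elim0⟩
    rcases Finset.eq_empty_or_nonempty E with rfl | hEne
    · exact menger_empty n S T h
    obtain ⟨⟨x, y⟩, he⟩ := hEne
    have hE'card : (E.erase (x, y)).card ≤ N := by
      rw [Finset.card_erase_of_mem he]
      have : 1 ≤ E.card := Finset.card_pos.mpr ⟨(x, y), he⟩
      omega
    by_cases hbig : ∀ R : Finset V, Cut (E.erase (x, y)) S T R → n ≤ R.card
    · obtain ⟨p, hp, hdisj⟩ := ih (E.erase (x, y)) hE'card n S T hbig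
      exact ⟨p, fun i => conn_mono (Finset.erase_subset _ _) (hp i), hdisj⟩
    push_neg at hbig
    obtain ⟨R₀, hcut₀, hR₀card⟩ := hbig
    -- x ≠ y
    have hxy : x ≠ y := by
      rintro rfl
      have hc : Cut E S T R₀ := by
        intro l hl
        rcases chain_erase_or_split E x x l hl.1 with hch' | ⟨s, t, hlt⟩
        · exact hcut₀ l ⟨hch', hl.2.1, hl.2.2.1, hl.2.2.2.1, hl.2.2.2.2⟩
        · exfalso
          have hnd := hl.2.1
          rw [hlt, List.nodup_append'] at hnd
          simpa using hnd.2.1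
      exact absurd (h R₀ hc) (by omega)
    -- the two enlarged cuts
    have hcutx : Cut E S T (insert x R₀) := by
      refine cut_transfer_left hcut₀ _ ?_
      intro l hl
      exact ⟨l.getLast hl.2.2.1, hl.2.2.2.2 _ (List.getLast?_eq_getLast _),
        List.getLast_mem _⟩
    have hcuty : Cut E S T (insert y R₀) := by
      refine cut_transfer_right hcut₀ _ ?_
      intro l hl
      exact ⟨l.head hl.2.2.1, hl.2.2.2.1 _ (List.head?_eq_head _),
        List.head_mem _⟩
    have hxR₀ : x ∉ R₀ := by
      intro hx
      rw [Finset.insert_eq_self.mpr hx] at hcutx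
      exact absurd (h _ hcutx) (by omega)
    have hyR₀ : y ∉ R₀ := by
      intro hy
      rw [Finset.insert_eq_self.mpr hy] at hcuty
      exact absurd (h _ hcuty) (by omega)
    have hSxcard : (insert x R₀).card = n := by
      have h1 := h _ hcutx
      have h2 : (insert x R₀).card ≤ R₀.card + 1 := Finset.card_insert_le _ _
      omega
    have hSycard : (insert y R₀).card = n := by
      have h1 := h _ hcuty
      have h2 : (insert y R₀).card ≤ R₀.card + 1 := Finset.card_insert_le _ _
      omega
    -- apply induction hypothesis twice
    obtain ⟨P0, hP0, hP0disj⟩ := ih (E.erase (x, y)) hE'card n S (insert x R₀)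
      (fun R hR => h R (cut_transfer_left hcut₀ R hR))
    obtain ⟨Q0, hQ0, hQ0disj⟩ := ih (E.erase (x, y)) hE'card n (insert y R₀) T
      (fun R hR => h R (cut_transfer_right hcut₀ R hR))
    -- truncate
    choose P hP hPsub hPlast using fun i => conn_truncate_first (hP0 i)
    choose Q hQ hQsub hQhead using fun i => conn_truncate_last (hQ0 i)
    have hPdisj : ∀ i j, i ≠ j → ∀ v, v ∈ P i → v ∉ P j :=
      fun i j hij v hvi hvj => hP0disj i j hij v (hPsub i v hvi) (hPsub j v hvj)
    have hQdisj : ∀ i j, i ≠ j → ∀ v, v ∈ Q i → v ∉ Q j :=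
      fun i j hij v hvi hvj => hQ0disj i j hij v (hQsub i v hvi) (hQsub j v hvj)
    have hPne : ∀ i, P i ≠ [] := fun i => (hP i).2.2.1
    have hQne : ∀ i, Q i ≠ [] := fun i => (hQ i).2.2.1
    -- cross intersection lemma
    have cross : ∀ i j v, v ∈ P i → v ∈ Q j →
        (P i).getLast? = some v ∧ (Q j).head? = some v := by
      intro i j v hvP hvQ
      obtain ⟨p₁, p₂, hPeq⟩ := List.append_of_mem hvP
      obtain ⟨q₁, q₂, hQeq⟩ := List.append_of_mem hvQ
      have hcp := (hP i).1
      dsimp only [List.Chain'] at hcp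
      rw [hPeq, List.isChain_append] at hcp
      have hcq := (hQ j).1
      dsimp only [List.Chain'] at hcq
      rw [hQeq, List.isChain_append] at hcq
      have hchw : (p₁ ++ v :: q₂).Chain' (fun a b => (a, b) ∈ E.erase (x, y)) := by
        dsimp only [List.Chain'] at ⊢
        rw [List.isChain_append]
        refine ⟨hcp.1, hcq.2.1, fun a ha b hb => ?_⟩
        have hbv : b = v := by simpa using hb.symm
        subst hbv
        exact hcp.2.2 a ha b rfl
      have hwne : p₁ ++ v :: q₂ ≠ [] := by simp
      have hwhd : (p₁ ++ v :: q₂).head? = (P i).head? := by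
        rw [hPeq]; simp [List.head?_append]
      have hwlast : (p₁ ++ v :: q₂).getLast? = (Q j).getLast? := by
        rw [hQeq, getLast?_append_right (by simp : (v :: q₂) ≠ []),
          getLast?_append_right (by simp : (v :: q₂) ≠ [])]
      obtain ⟨m, hm1, hm2, hm3, hm4, hm5, hm6⟩ :=
        exists_nodup_chain (p₁ ++ v :: q₂).length (p₁ ++ v :: q₂) le_rfl hchw hwne
      have hmconn : Conn (E.erase (x, y)) S T m :=
        ⟨hm1, hm2, hm3,
          fun a ha => (hP i).2.2.2.1 a (by rw [← hwhd, ← hm4]; exact ha),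
          fun b hb => (hQ j).2.2.2.2 b (by rw [← hwlast, ← hm5]; exact hb)⟩
      obtain ⟨u, huR₀, hum⟩ := hcut₀ m hmconn
      have huw := hm6 u hum
      rw [List.mem_append, List.mem_cons] at huw
      have hndP := (hP i).2.1
      have hndQ := (hQ j).2.1
      rcases huw with hup | huv | huq
      · exfalso
        have hulast : (P i).getLast? = some u :=
          hPlast i u (by rw [hPeq]; exact List.mem_append_left _ hup)
            (Finset.mem_insert_of_mem huR₀)
        rw [hPeq, getLast?_append_right (by simp : (v :: p₂) ≠ [])] at hulast
        have humem : u ∈ v :: p₂ := by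
          rw [List.getLast?_eq_getLast (by simp : (v :: p₂) ≠ []),
            Option.some.injEq] at hulast
          exact hulast ▸ List.getLast_mem (by simp : (v :: p₂) ≠ [])
        rw [hPeq, List.nodup_append'] at hndP
        exact hndP.2.2 hup humem
      · subst huv
        exact ⟨hPlast i u hvP (Finset.mem_insert_of_mem huR₀),
          hQhead j u hvQ (Finset.mem_insert_of_mem huR₀)⟩
      · exfalso
        have huQ : u ∈ Q j := by
          rw [hQeq]
          exact List.mem_append_right _ (List.mem_cons_of_mem _ huq)
        have huhead : (Q j).head? = some u :=
          hQhead j u huQ (Finset.mem_insert_of_mem huR₀)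
        rw [hQeq] at huhead hndQ
        rw [List.nodup_append'] at hndQ
        cases q₁ with
        | nil =>
          simp only [List.nil_append, List.head?_cons, Option.some.injEq] at huhead
          subst huhead
          exact (List.nodup_cons.mp hndQ.2.1).1 huq
        | cons c cs =>
          simp only [List.cons_append, List.head?_cons, Option.some.injEq] at huhead
          subst huhead
          exact hndQ.2.2 (by simp) (List.mem_cons_of_mem _ huq)
    -- endpoint bijections
    have hfLinj : Function.Injective (fun i : Fin n =>
        (⟨(P i).getLast (hPne i), (hP i).2.2.2.2 _ (List.getLast?_eq_getLast _)⟩ :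
          ↥(insert x R₀))) := by
      intro i j hij
      simp only [Subtype.mk.injEq] at hij
      by_contra hne'
      exact hPdisj i j hne' _ (List.getLast_mem (hPne i))
        (by rw [hij]; exact List.getLast_mem (hPne j))
    have hfHinj : Function.Injective (fun i : Fin n =>
        (⟨(Q i).head (hQne i), (hQ i).2.2.2.1 _ (List.head?_eq_head _)⟩ :
          ↥(insert y R₀))) := by
      intro i j hij
      simp only [Subtype.mk.injEq] at hij
      by_contra hne'
      exact hQdisj i j hne' _ (List.head_mem (hQne i))
        (by rw [hij]; exact List.head_mem (hQne j))
    have hfLbij := (Fintype.bijective_iff_injective_and_card _).mpr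
      ⟨hfLinj, by rw [Fintype.card_fin, Fintype.card_coe, hSxcard]⟩
    have hfHbij := (Fintype.bijective_iff_injective_and_card _).mpr
      ⟨hfHinj, by rw [Fintype.card_fin, Fintype.card_coe, hSycard]⟩
    obtain ⟨i₀, hi₀⟩ := hfLbij.2 ⟨x, Finset.mem_insert_self x R₀⟩
    obtain ⟨j₀, hj₀⟩ := hfHbij.2 ⟨y, Finset.mem_insert_self y R₀⟩
    have hi₀' : (P i₀).getLast (hPne i₀) = x := congrArg Subtype.val hi₀
    have hj₀' : (Q j₀).head (hQne j₀) = y := congrArg Subtype.val hj₀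
    -- y avoids all P-paths, x avoids all Q-paths
    have hynotP : ∀ i, y ∉ P i := by
      intro i hyP
      have hc := (cross i j₀ y hyP (by rw [← hj₀']; exact List.head_mem (hQne j₀))).1
      have hySx : y ∈ insert x R₀ := (hP i).2.2.2.2 y hc
      rcases Finset.mem_insert.mp hySx with h' | h'
      · exact hxy h'.symm
      · exact hyR₀ h'
    -- matching between P-endpoints and Q-startpoints
    have hmatch : ∀ i, i ≠ i₀ → ∃ j, (Q j).head (hQne j) = (P i).getLast (hPne i) := by
      intro i hii
      have hSx : (P i).getLast (hPne i) ∈ insert x R₀ :=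
        (hP i).2.2.2.2 _ (List.getLast?_eq_getLast (hPne i))
      have hmem : (P i).getLast (hPne i) ∈ R₀ := by
        rcases Finset.mem_insert.mp hSx with h' | h'
        · exfalso
          apply hii
          by_contra hne'
          exact hPdisj i i₀ hne' x (h' ▸ List.getLast_mem (hPne i))
            (hi₀' ▸ List.getLast_mem (hPne i₀))
        · exact h'
      obtain ⟨j, hj⟩ := hfHbij.2 ⟨(P i).getLast (hPne i), Finset.mem_insert_of_mem hmem⟩
      exact ⟨j, congrArg Subtype.val hj⟩
    set σ : Fin n → Fin n := fun i =>
      if hdec : i = i₀ then j₀ else Classical.choose (hmatch i hdec) with hσdef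
    have hσi₀ : σ i₀ = j₀ := by rw [hσdef]; exact dif_pos rfl
    have hσhead : ∀ i (hii : i ≠ i₀),
        (Q (σ i)).head (hQne (σ i)) = (P i).getLast (hPne i) := by
      intro i hii
      have hs : σ i = Classical.choose (hmatch i hii) := by rw [hσdef]; exact dif_neg hii
      rw [hs]
      exact Classical.choose_spec (hmatch i hii)
    have hσinj : Function.Injective σ := by
      intro i j hij
      by_cases hi : i = i₀ <;> by_cases hj : j = i₀
      · rw [hi, hj]
      · exfalso
        subst hi
        rw [hσi₀] at hij
        have h1 := hσhead j hj
        rw [← hij] at h1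
        apply hynotP j
        rw [hj₀'.symm.trans h1]
        exact List.getLast_mem (hPne j)
      · exfalso
        subst hj
        rw [hσi₀] at hij
        have h1 := hσhead i hi
        rw [hij] at h1
        apply hynotP i
        rw [hj₀'.symm.trans h1]
        exact List.getLast_mem (hPne i)
      · have h1 := hσhead i hi
        have h2 := hσhead j hj
        rw [hij] at h1
        have h3 : (P i).getLast (hPne i) = (P j).getLast (hPne j) := by rw [← h1, h2]
        by_contra hne'
        exact hPdisj i j hne' _ (List.getLast_mem (hPne i))
          (by rw [h3]; exact List.getLast_mem (hPne j))
    -- head-not-in-tail facts for the Q paths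
    have hQht : ∀ jj, (Q jj).head (hQne jj) ∉ (Q jj).tail := by
      intro jj
      have h6 := (hQ jj).2.1
      rw [← List.cons_head_tail (hQne jj)] at h6
      exact (List.nodup_cons.mp h6).1
    refine ⟨fun i => if i = i₀ then P i₀ ++ Q j₀ else P i ++ (Q (σ i)).tail, ?_, ?_⟩
    · -- each glued list is a path
      intro i
      dsimp only
      by_cases hi : i = i₀
      · rw [if_pos hi]
        have hchP : (P i₀).Chain' (fun a b => (a, b) ∈ E) :=
          (hP i₀).1.imp (fun _ _ hab => Finset.mem_of_mem_erase hab)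
        have hchQ : (Q j₀).Chain' (fun a b => (a, b) ∈ E) :=
          (hQ j₀).1.imp (fun _ _ hab => Finset.mem_of_mem_erase hab)
        refine ⟨?_, ?_, by simp [hPne i₀], ?_, ?_⟩
        · dsimp only [List.Chain'] at ⊢
          rw [List.isChain_append]
          refine ⟨hchP, hchQ, fun a ha b hb => ?_⟩
          have ha' : a = x := by
            rw [List.getLast?_eq_getLast (hPne i₀), hi₀'] at ha
            exact (Option.mem_some_iff.mp ha).symm
          have hb' : b = y := by
            rw [List.head?_eq_head (hQne j₀), hj₀'] at hb
            exact (Option.mem_some_iff.mp hb).symm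
          rw [ha', hb']
          exact he
        · rw [List.nodup_append']
          refine ⟨(hP i₀).2.1, (hQ j₀).2.1, fun v hvP hvQ => ?_⟩
          have hc := cross i₀ j₀ v hvP hvQ
          have hvx : v = x := by
            rw [List.getLast?_eq_getLast (hPne i₀), hi₀', Option.some.injEq] at hc
            exact hc.1.symm
          have hvy : v = y := by
            rw [List.head?_eq_head (hQne j₀), hj₀', Option.some.injEq] at hc
            exact hc.2.symm
          exact hxy (hvx ▸ hvy)
        · intro a ha
          rw [head?_append_left (hPne i₀)] at ha
          exact (hP i₀).2.2.2.1 a ha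
        · intro b hb
          rw [getLast?_append_right (hQne j₀)] at hb
          exact (hQ j₀).2.2.2.2 b hb
      · rw [if_neg hi]
        have hhd := hσhead i hi
        have hQc : Q (σ i) = (P i).getLast (hPne i) :: (Q (σ i)).tail := by
          rw [← hhd]
          exact (List.cons_head_tail _).symm
        have hchQ : (Q (σ i)).Chain' (fun a b => (a, b) ∈ E) :=
          (hQ (σ i)).1.imp (fun _ _ hab => Finset.mem_of_mem_erase hab)
        refine ⟨?_, ?_, by simp [hPne i], ?_, ?_⟩
        · dsimp only [List.Chain'] at ⊢
          rw [List.isChain_append]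
          refine ⟨(hP i).1.imp (fun _ _ hab => Finset.mem_of_mem_erase hab),
            hchQ.tail, fun a ha b hb => ?_⟩
          have ha' : a = (P i).getLast (hPne i) := by
            rw [List.getLast?_eq_getLast (hPne i)] at ha
            exact (Option.mem_some_iff.mp ha).symm
          subst ha'
          have h5 := hchQ
          dsimp only [List.Chain'] at h5
          rw [hQc, List.isChain_cons] at h5
          exact h5.1 b hb
        · rw [List.nodup_append']
          refine ⟨(hP i).2.1, List.Nodup.sublist (List.tail_sublist _) ((hQ (σ i)).2.1),
            fun v hvP hvT => ?_⟩
          have hvQ : v ∈ Q (σ i) := List.mem_of_mem_tail hvT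
          have hc := (cross i (σ i) v hvP hvQ).2
          have hv' : v = (Q (σ i)).head (hQne (σ i)) := by
            rw [List.head?_eq_head (hQne (σ i)), Option.some.injEq] at hc
            exact hc.symm
          exact hQht (σ i) (hv' ▸ hvT)
        · intro a ha
          rw [head?_append_left (hPne i)] at ha
          exact (hP i).2.2.2.1 a ha
        · intro b hb
          by_cases ht : (Q (σ i)).tail = []
          · rw [ht, List.append_nil] at hb
            apply (hQ (σ i)).2.2.2.2 b
            rw [hQc, ht]
            rw [List.getLast?_eq_getLast (hPne i)] at hb
            simpa using hb
          · rw [getLast?_append_right ht] at hb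
            apply (hQ (σ i)).2.2.2.2 b
            have h7 : (Q (σ i)).getLast? = (Q (σ i)).tail.getLast? := by
              conv_lhs => rw [hQc]
              rw [show ((P i).getLast (hPne i) :: (Q (σ i)).tail) =
                [(P i).getLast (hPne i)] ++ (Q (σ i)).tail from rfl]
              exact getLast?_append_right ht
            rw [h7]
            exact hb
    · -- pairwise disjointness
      have hdec2 : ∀ (jj : Fin n) (v : V),
          v ∈ (if jj = i₀ then P i₀ ++ Q j₀ else P jj ++ (Q (σ jj)).tail) →
          v ∈ P jj ∨ v ∈ Q (σ jj) := by
        intro jj v hv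
        by_cases hj : jj = i₀
        · subst hj
          rw [if_pos rfl] at hv
          rcases List.mem_append.mp hv with h' | h'
          · exact Or.inl h'
          · exact Or.inr (by rw [hσi₀]; exact h')
        · rw [if_neg hj] at hv
          rcases List.mem_append.mp hv with h' | h'
          · exact Or.inl h'
          · exact Or.inr (List.mem_of_mem_tail h')
      have hPF : ∀ (ii jj : Fin n) (v : V), v ∈ P ii →
          v ∈ (if jj = i₀ then P i₀ ++ Q j₀ else P jj ++ (Q (σ jj)).tail) →
          v ∈ P jj := by
        intro ii jj v hvP hvF
        by_cases hj : jj = i₀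
        · subst hj
          rw [if_pos rfl] at hvF
          rcases List.mem_append.mp hvF with h' | h'
          · exact h'
          · exfalso
            have hc := (cross ii j₀ v hvP h').2
            have hvy : v = y := by
              rw [List.head?_eq_head (hQne j₀), hj₀', Option.some.injEq] at hc
              exact hc.symm
            exact hynotP ii (hvy ▸ hvP)
        · rw [if_neg hj] at hvF
          rcases List.mem_append.mp hvF with h' | h'
          · exact h'
          · exfalso
            have hvQ := List.mem_of_mem_tail h'
            have hc := (cross ii (σ jj) v hvP hvQ).2
            have hv' : v = (Q (σ jj)).head (hQne (σ jj)) := by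
              rw [List.head?_eq_head (hQne (σ jj)), Option.some.injEq] at hc
              exact hc.symm
            exact hQht (σ jj) (hv' ▸ h')
      intro i j hij v hvi hvj
      rcases hdec2 i v hvi with hPi | hQi
      · exact hPdisj i j hij v hPi (hPF i j v hPi hvj)
      · rcases hdec2 j v hvj with hPj | hQj
        · exact hPdisj j i (Ne.symm hij) v hPj (hPF j i v hPj hvi)
        · exact hQdisj (σ i) (σ j) (fun hc => hij (hσinj hc)) v hQi hQj

lemma exists_pred_of_mem_tail {α : Type*} {r : α → α → Prop} :
    ∀ (l : List α), l.Chain' r → ∀ v ∈ l.tail, ∃ u, r u v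
  | [] => by simp
  | [a] => by simp
  | a :: b :: t => fun h v hv => by
      rcases List.mem_cons.mp hv with rfl | hv'
      · exact ⟨a, (List.isChain_cons_cons.mp h).1⟩
      · exact exists_pred_of_mem_tail (b :: t) (List.isChain_cons_cons.mp h).2 v hv'

end
end MengerAux

/-- `l` is a directed path from `A` to `B` in the directed graph given by the
edge relation `D`: the full vertex sequence `A = v₀, …, v_m = B` consists of
distinct vertices with a directed edge between consecutive ones. -/
def IsDipath {V : Type*} (D : V → V → Prop) (A B : V) (l : List V) : Prop :=
  l.Chain' D ∧ l.head? = some A ∧ l.getLast? = some B ∧ l.Nodup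

/-- Menger-type theorem: `A` and `B` are not `2k`-separable iff there exist
`2k+1` directed paths from `A` to `B` that are pairwise internally
vertex-disjoint. -/
theorem not_two_k_separable_iff_disjoint_paths
    {V : Type*} [Fintype V] [DecidableEq V]
    (D : V → V → Prop) (A B : V) (hAB : A ≠ B) (hnoEdge : ¬ D A B) (k : ℕ) :
    (¬ ∃ W : Finset V, A ∉ W ∧ B ∉ W ∧ W.card ≤ 2 * k ∧
        ∀ l : List V, IsDipath D A B l → ∃ v ∈ W, v ∈ l) ↔
      (∃ p : Fin (2 * k + 1) → List V,
        (∀ i, IsDipath D A B (p i)) ∧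
        ∀ i j, i ≠ j → ∀ v, v ∈ p i → v ∈ p j → v = A ∨ v = B) := by
  classical
  constructor
  · -- hard direction: no small separator → 2k+1 disjoint paths
    intro hsep
    set E : Finset (V × V) := Finset.univ.filter
      (fun q => D q.1 q.2 ∧ q.1 ≠ A ∧ q.1 ≠ B ∧ q.2 ≠ A ∧ q.2 ≠ B) with hE
    set S : Finset V := Finset.univ.filter (fun v => D A v ∧ v ≠ A ∧ v ≠ B) with hS
    set T : Finset V := Finset.univ.filter (fun v => D v B ∧ v ≠ A ∧ v ≠ B) with hT
    have hmain : ∀ R : Finset V, MengerAux.Cut E S T R → 2 * k + 1 ≤ R.card := by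
      intro R hR
      by_contra hlt
      push_neg at hlt
      apply hsep
      refine ⟨(R.erase A).erase B, fun hc => (Finset.mem_of_mem_erase hc |>
        Finset.mem_erase.mp |>.1) rfl, fun hc => (Finset.mem_erase.mp hc).1 rfl,
        ?_, ?_⟩
      · calc ((R.erase A).erase B).card ≤ (R.erase A).card := Finset.card_erase_le
          _ ≤ R.card := Finset.card_erase_le
          _ ≤ 2 * k := by omega
      · intro l hl
        obtain ⟨hch, hhd, hlst, hnd⟩ := hl
        -- decompose l = A :: mid ++ [B]
        obtain ⟨t, rfl⟩ : ∃ t, l = A :: t := by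
          cases l with
          | nil => simp at hhd
          | cons a t =>
            have haA : a = A := by simpa using hhd
            exact ⟨t, by rw [haA]⟩
        have htne : t ≠ [] := by
          rintro rfl
          simp at hlst
          exact hAB hlst
        have hlstt : t.getLast? = some B := by
          rwa [show A :: t = [A] ++ t from rfl,
            MengerAux.getLast?_append_right htne] at hlst
        have htB : t = t.dropLast ++ [B] := by
          have h1 := List.dropLast_append_getLast htne
          have h2 : t.getLast htne = B := by
            rw [List.getLast?_eq_getLast htne] at hlstt
            simpa using hlstt
          rw [← h2]
          exact h1.symm
        set mid := t.dropLast with hmid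
        have hmidne : mid ≠ [] := by
          rintro hmid0
          rw [htB, hmid0, List.nil_append] at hch
          exact hnoEdge (List.isChain_cons_cons.mp hch).1
        have hchl : (A :: (mid ++ [B])).Chain' D := by rwa [← htB]
        have hndl : (A :: (mid ++ [B])).Nodup := by rwa [← htB]
        have hAmid : A ∉ mid := fun hc =>
          (List.nodup_cons.mp hndl).1 (List.mem_append_left _ hc)
        have hBmid : B ∉ mid := fun hc => by
          have := (List.nodup_cons.mp hndl).2
          rw [List.nodup_append'] at this
          exact this.2.2 hc (by simp)
        have hmidnd : mid.Nodup := by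
          have := (List.nodup_cons.mp hndl).2
          rw [List.nodup_append'] at this
          exact this.1
        have hchmid : mid.Chain' D :=
          ((List.isChain_cons.mp hchl).2.prefix ⟨[B], rfl⟩)
        have hjunc : ∀ a ∈ mid.getLast?, D a B := by
          have h3 := (List.isChain_cons.mp hchl).2
          rw [List.isChain_append] at h3
          intro a ha
          exact h3.2.2 a ha B rfl
        have hAh : ∀ a ∈ mid.head?, D A a := by
          have h3 := (List.isChain_cons.mp hchl).1
          intro a ha
          apply h3
          rwa [MengerAux.head?_append_left hmidne]
        have hconn : MengerAux.Conn E S T mid := by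
          refine ⟨?_, hmidnd, hmidne, ?_, ?_⟩
          · refine MengerAux.chain'_imp_strong mid hchmid ?_
            intro a b ha hb hab
            have haM : a ∈ mid := (List.dropLast_sublist mid).mem ha
            have hbM : b ∈ mid := (List.tail_sublist mid).mem hb
            rw [hE]
            simp only [Finset.mem_filter, Finset.mem_univ, true_and]
            exact ⟨hab, fun hc => hAmid (hc ▸ haM), fun hc => hBmid (hc ▸ haM),
              fun hc => hAmid (hc ▸ hbM), fun hc => hBmid (hc ▸ hbM)⟩
          · intro a ha
            have haM : a ∈ mid := by
              have := List.head?_eq_head hmidne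
              rw [this, Option.some.injEq] at ha
              exact ha ▸ List.head_mem hmidne
            rw [hS]
            simp only [Finset.mem_filter, Finset.mem_univ, true_and]
            exact ⟨hAh a (by rw [ha]; rfl), fun hc => hAmid (hc ▸ haM),
              fun hc => hBmid (hc ▸ haM)⟩
          · intro b hb
            have hbM : b ∈ mid := by
              rw [List.getLast?_eq_getLast hmidne, Option.some.injEq] at hb
              exact hb ▸ List.getLast_mem hmidne
            rw [hT]
            simp only [Finset.mem_filter, Finset.mem_univ, true_and]
            exact ⟨hjunc b (by rw [hb]; rfl), fun hc => hAmid (hc ▸ hbM),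
              fun hc => hBmid (hc ▸ hbM)⟩
        obtain ⟨v, hvR, hvmid⟩ := hR mid hconn
        refine ⟨v, Finset.mem_erase.mpr ⟨fun hc => hBmid (hc ▸ hvmid),
          Finset.mem_erase.mpr ⟨fun hc => hAmid (hc ▸ hvmid), hvR⟩⟩, ?_⟩
        rw [htB]
        exact List.mem_cons_of_mem _ (List.mem_append_left _ hvmid)
    obtain ⟨m, hm, hmdisj⟩ :=
      MengerAux.setMenger E.card E le_rfl (2 * k + 1) S T hmain
    -- vertices of each m i avoid A and B
    have hmAB : ∀ i v, v ∈ m i → v ≠ A ∧ v ≠ B := by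
      intro i v hv
      have hmne := (hm i).2.2.1
      rw [← List.cons_head_tail hmne] at hv
      rcases List.mem_cons.mp hv with rfl | hv'
      · have := (hm i).2.2.2.1 _ (List.head?_eq_head hmne)
        rw [hS] at this
        simp only [Finset.mem_filter, Finset.mem_univ, true_and] at this
        exact ⟨this.2.1, this.2.2⟩
      · obtain ⟨u, hu⟩ := MengerAux.exists_pred_of_mem_tail (m i) (hm i).1 v hv'
        rw [hE] at hu
        simp only [Finset.mem_filter, Finset.mem_univ, true_and] at hu
        exact ⟨hu.2.2.2.1, hu.2.2.2.2⟩
    refine ⟨fun i => A :: (m i ++ [B]), fun i => ?_, fun i j hij v hvi hvj => ?_⟩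
    · have hmne := (hm i).2.2.1
      have hhead := (hm i).2.2.2.1 _ (List.head?_eq_head hmne)
      rw [hS] at hhead
      simp only [Finset.mem_filter, Finset.mem_univ, true_and] at hhead
      have hlastm := (hm i).2.2.2.2 _ (List.getLast?_eq_getLast hmne)
      rw [hT] at hlastm
      simp only [Finset.mem_filter, Finset.mem_univ, true_and] at hlastm
      refine ⟨?_, rfl, ?_, ?_⟩
      · dsimp only [List.Chain'] at ⊢
        rw [List.isChain_cons]
        constructor
        · intro a ha
          rw [MengerAux.head?_append_left hmne, List.head?_eq_head hmne,
            Option.mem_def, Option.some.injEq] at ha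
          rw [← ha]
          exact hhead.1
        · rw [List.isChain_append]
          refine ⟨(hm i).1.imp ?_, List.isChain_singleton B, ?_⟩
          · intro a b hab
            rw [hE] at hab
            simp only [Finset.mem_filter, Finset.mem_univ, true_and] at hab
            exact hab.1
          · intro a ha b hb
            rw [List.getLast?_eq_getLast hmne, Option.mem_def,
              Option.some.injEq] at ha
            have hbB : b = B := by simpa using hb.symm
            rw [← ha, hbB]
            exact hlastm.1
      · show (A :: (m i ++ [B])).getLast? = some B
        rw [show A :: (m i ++ [B]) = [A] ++ (m i ++ [B]) from rfl,
          MengerAux.getLast?_append_right (by simp), List.getLast?_concat]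
      · rw [List.nodup_cons, List.nodup_append']
        refine ⟨?_, (hm i).2.1, by simp, ?_⟩
        · rw [List.mem_append]
          rintro (hc | hc)
          · exact (hmAB i A hc).1 rfl
          · exact hAB (by simpa using hc)
        · intro v hv hc
          have : v = B := by simpa using hc
          exact (hmAB i v hv).2 this
    · rcases List.mem_cons.mp hvi with rfl | hvi'
      · exact Or.inl rfl
      rcases List.mem_append.mp hvi' with hvm | hvB
      · rcases List.mem_cons.mp hvj with rfl | hvj'
        · exact Or.inl rfl
        rcases List.mem_append.mp hvj' with hvm' | hvB'
        · exact absurd hvm' (hmdisj i j hij v hvm)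
        · exact Or.inr (by simpa using hvB')
      · exact Or.inr (by simpa using hvB)
  · -- easy direction
    rintro ⟨p, hp, hdisj⟩ ⟨W, hAW, hBW, hWcard, hWsep⟩
    choose v hvW hvp using fun i => hWsep (p i) (hp i)
    have hinj : Function.Injective v := by
      intro i j hij
      by_contra hne
      rcases hdisj i j hne (v i) (hvp i) (hij ▸ hvp j) with hA | hB
      · exact hAW (hA ▸ hvW i)
      · exact hBW (hB ▸ hvW i)
    have hcard : 2 * k + 1 ≤ W.card := by
      have h1 : (Finset.univ : Finset (Fin (2 * k + 1))).card ≤ W.card :=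
        Finset.card_le_card_of_injOn v (fun i _ => hvW i)
          (fun i _ j _ hij => hinj hij)
      simpa using h1
    omega
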